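/- For every CQ q and every collection of labeled examples E = (E+,E−) with E+ finite and nonempty, the following are equivalent: (1) q is a most-specific fitting CQ for E; (2) q fits E and q is equivalent to the canonical CQ of the direct product Π_{e ∈ E+} e of the positive examples. -/

import Mathlib

/-! ## Basic setting: schemas, instances, homomorphisms, conjunctive queries -/

/-- A schema: a type of relation symbols, each with an associated arity. -/
structure Schema where
  Rel : Type
  arity : Rel → ℕ

/-- A fact over a schema `S`: a relation symbol of `S` applied to a tuple of values
(values are natural numbers) whose length is the arity of the symbol. -/
structure DBFact (S : Schema) where
  rel : S.Rel
  args : List ℕ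
  arity_eq : args.length = S.arity rel

/-- A database instance over `S`: a finite set of facts. -/
structure Instance (S : Schema) where
  facts : Set (DBFact S)
  finite : facts.Finite

/-- The active domain of an instance: all values occurring in its facts. -/
def Instance.adom {S : Schema} (I : Instance S) : Set ℕ :=
  { v | ∃ f ∈ I.facts, v ∈ f.args }

/-- The image of a fact under a map on values. -/
def DBFact.map {S : Schema} (h : ℕ → ℕ) (f : DBFact S) : DBFact S :=
  ⟨f.rel, f.args.map h, by simpa using f.arity_eq⟩

/-- `h` is a homomorphism from `I` to `J`: the image of every fact of `I` is a fact of `J`. -/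
def IsHom {S : Schema} (I J : Instance S) (h : ℕ → ℕ) : Prop :=
  ∀ f ∈ I.facts, f.map h ∈ J.facts

/-- A pointed instance: an instance together with a distinguished `k`-tuple of values. -/
abbrev PInst (S : Schema) (k : ℕ) := Instance S × (Fin k → ℕ)

/-- A pointed instance is a (valid) data example if its distinguished tuple lies in the
active domain. -/
def IsExample {S : Schema} {k : ℕ} (e : PInst S k) : Prop :=
  ∀ i, e.2 i ∈ e.1.adom

/-- `(I,a) → (J,b)`: there is a homomorphism from `I` to `J` mapping `a` to `b`. -/
def PHom {S : Schema} {k : ℕ} (e e' : PInst S k) : Prop :=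
  ∃ h : ℕ → ℕ, IsHom e.1 e'.1 h ∧ ∀ i, h (e.2 i) = e'.2 i

/-- A `k`-ary conjunctive query over `S`: a finite set of atoms (facts over variables,
where variables are natural numbers) together with a `k`-tuple of answer variables. -/
structure CQ (S : Schema) (k : ℕ) where
  atoms : Set (DBFact S)
  finite : atoms.Finite
  ans : Fin k → ℕ

/-- `q(I)`: the set of `k`-tuples `a` over the active domain of `I` such that some
assignment of the variables of `q` into `I` maps every atom to a fact of `I`
and the answer variables to `a`. -/
def CQ.eval {S : Schema} {k : ℕ} (q : CQ S k) (I : Instance S) : Set (Fin k → ℕ) :=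
  { a | (∀ i, a i ∈ I.adom) ∧
        ∃ h : ℕ → ℕ, (∀ f ∈ q.atoms, f.map h ∈ I.facts) ∧ ∀ i, h (q.ans i) = a i }

/-- Containment `q₁ ⊆ q₂` : `q₁(I) ⊆ q₂(I)` for all instances `I`. -/
def CQ.contained {S : Schema} {k : ℕ} (q₁ q₂ : CQ S k) : Prop :=
  ∀ I : Instance S, q₁.eval I ⊆ q₂.eval I

/-- Equivalence of CQs: mutual containment. -/
def CQ.equiv {S : Schema} {k : ℕ} (q₁ q₂ : CQ S k) : Prop :=
  q₁.contained q₂ ∧ q₂.contained q₁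

/-- A collection of labeled examples `E = (E⁺, E⁻)`. -/
structure LabeledExamples (S : Schema) (k : ℕ) where
  pos : Set (PInst S k)
  neg : Set (PInst S k)

/-- `q` fits `E`: every element of `E⁺` is a positive example for `q` and every element
of `E⁻` is a negative example for `q`. -/
def CQ.fits {S : Schema} {k : ℕ} (q : CQ S k) (E : LabeledExamples S k) : Prop :=
  (∀ e ∈ E.pos, e.2 ∈ q.eval e.1) ∧ (∀ e ∈ E.neg, e.2 ∉ q.eval e.1)

/-! ## Extremal fitting CQs -/

/-- `q` is a most-specific fitting CQ for `E`. -/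
def IsMostSpecificFit {S : Schema} {k : ℕ} (q : CQ S k) (E : LabeledExamples S k) : Prop :=
  q.fits E ∧ ∀ q' : CQ S k, q'.fits E → q.contained q'

/-- `q` is a strongly most-general fitting CQ for `E`. -/
def IsStronglyMostGeneralFit {S : Schema} {k : ℕ} (q : CQ S k) (E : LabeledExamples S k) : Prop :=
  q.fits E ∧ ∀ q' : CQ S k, q'.fits E → q'.contained q

/-- `q` is a weakly most-general fitting CQ for `E`. -/
def IsWeaklyMostGeneralFit {S : Schema} {k : ℕ} (q : CQ S k) (E : LabeledExamples S k) : Prop :=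
  q.fits E ∧ ∀ q' : CQ S k, q'.fits E → q.contained q' → q.equiv q'

/-- `B` is a (finite) basis of most-general fitting CQs for `E`. -/
def IsBasisOfMostGeneralFits {S : Schema} {k : ℕ} (B : Set (CQ S k))
    (E : LabeledExamples S k) : Prop :=
  B.Finite ∧ (∀ q ∈ B, q.fits E) ∧ ∀ q' : CQ S k, q'.fits E → ∃ q ∈ B, q'.contained q

/-! ## Canonical examples and relativized homomorphism dualities -/

/-- The canonical example `e_q` of a CQ `q`: its atoms as facts, pointed at the
answer variables. -/
def CQ.canonEx {S : Schema} {k : ℕ} (q : CQ S k) : PInst S k :=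
  (⟨q.atoms, q.finite⟩, q.ans)

/-- The canonical CQ of a pointed instance. -/
def canonCQ {S : Schema} {k : ℕ} (e : PInst S k) : CQ S k :=
  ⟨e.1.facts, e.1.finite, e.2⟩

/-- `(F, D)` is a homomorphism duality relative to the pointed instance `e`:
for every data example `e'` that maps homomorphically into `e`,
some element of `F` maps homomorphically into `e'` iff `e'` maps homomorphically
into no element of `D`. -/
def IsHomDualityRel {S : Schema} {k : ℕ} (e : PInst S k) (F D : Set (PInst S k)) : Prop :=
  ∀ e' : PInst S k, IsExample e' → PHom e' e →
    ((∃ f ∈ F, PHom f e') ↔ ∀ d ∈ D, ¬ PHom e' d)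

/-! ## Direct products -/

/-- The product of two facts with the same relation symbol, pairing values positionally
via the pairing function `Nat.pair`. -/
def DBFact.prod {S : Schema} (f g : DBFact S) (h : f.rel = g.rel) : DBFact S :=
  ⟨f.rel, List.zipWith Nat.pair f.args g.args, by
    rw [List.length_zipWith, f.arity_eq, g.arity_eq, h, min_self]⟩

/-- The direct product of two instances: all facts `R(⟨a₁,b₁⟩, …, ⟨aₙ,bₙ⟩)` with
`R(a₁,…,aₙ)` a fact of `I` and `R(b₁,…,bₙ)` a fact of `J`. -/
def Instance.prod {S : Schema} (I J : Instance S) : Instance S where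
  facts := { f | ∃ g ∈ I.facts, ∃ g' ∈ J.facts, ∃ h : g.rel = g'.rel, f = DBFact.prod g g' h }
  finite := by
    classical
    apply Set.Finite.subset (((I.finite.prod J.finite).image
      (fun p : DBFact S × DBFact S =>
        if h : p.1.rel = p.2.rel then DBFact.prod p.1 p.2 h else p.1)))
    rintro f ⟨g, hg, g', hg', h, rfl⟩
    exact ⟨(g, g'), ⟨hg, hg'⟩, dif_pos h⟩

/-- The direct product of two pointed instances. -/
def PInst.prod {S : Schema} {k : ℕ} (e e' : PInst S k) : PInst S k :=
  (e.1.prod e'.1, fun i => Nat.pair (e.2 i) (e'.2 i))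

/-! ## Path instances and path examples -/

/-- `I` is a path instance with chain values `a 0, …, a n` and chain relations
`R 1, …, R n`: its facts are the binary chain facts `R i (a (i-1), a i)` together
with unary facts on values `a j` with `j ≥ 1`. -/
def IsPathInstanceOn {S : Schema} (I : Instance S) (n : ℕ) (a : ℕ → ℕ) (R : ℕ → S.Rel) : Prop :=
  Set.InjOn a (Set.Iic n) ∧
  (∀ i, 1 ≤ i → i ≤ n → ∃ f ∈ I.facts, f.rel = R i ∧ f.args = [a (i - 1), a i]) ∧
  (∀ f ∈ I.facts,
      (∃ i, 1 ≤ i ∧ i ≤ n ∧ f.rel = R i ∧ f.args = [a (i - 1), a i]) ∨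
      (∃ j, 1 ≤ j ∧ j ≤ n ∧ f.args = [a j]))

/-- A path example: a unary pointed instance whose instance is a path instance and whose
distinguished value is the first value of the path. -/
def IsPathExample {S : Schema} (e : PInst S 1) : Prop :=
  ∃ (n : ℕ) (a : ℕ → ℕ) (R : ℕ → S.Rel), IsPathInstanceOn e.1 n a R ∧ e.2 0 = a 0

/-! ## Auxiliary lemmas -/

section Aux

variable {S : Schema} {k : ℕ}

lemma DBFact.map_map' (g h : ℕ → ℕ) (f : DBFact S) :
    (f.map g).map h = f.map (fun x => h (g x)) := by
  cases f
  simp [DBFact.map, List.map_map, Function.comp]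

lemma PHom.refl (e : PInst S k) : PHom e e := by
  refine ⟨id, fun f hf => ?_, fun i => rfl⟩
  have : f.map id = f := by cases f; simp [DBFact.map]
  rwa [this]

lemma PHom.trans {e₁ e₂ e₃ : PInst S k} (h12 : PHom e₁ e₂) (h23 : PHom e₂ e₃) :
    PHom e₁ e₃ := by
  obtain ⟨g, hg, hga⟩ := h12
  obtain ⟨h, hh, hha⟩ := h23
  refine ⟨fun x => h (g x), fun f hf => ?_, fun i => by simp only [hga i, hha i]⟩
  · rw [← DBFact.map_map']
    exact hh _ (hg f hf)

lemma zip_unpair_fst : ∀ (l₁ l₂ : List ℕ), l₁.length = l₂.length →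
    (List.zipWith Nat.pair l₁ l₂).map (fun n => n.unpair.1) = l₁
  | [], [], _ => rfl
  | a :: l₁, b :: l₂, h => by
    simp only [List.zipWith_cons_cons, List.map_cons, Nat.unpair_pair]
    rw [zip_unpair_fst l₁ l₂ (by simpa using h)]

lemma zip_unpair_snd : ∀ (l₁ l₂ : List ℕ), l₁.length = l₂.length →
    (List.zipWith Nat.pair l₁ l₂).map (fun n => n.unpair.2) = l₂
  | [], [], _ => rfl
  | a :: l₁, b :: l₂, h => by
    simp only [List.zipWith_cons_cons, List.map_cons, Nat.unpair_pair]
    rw [zip_unpair_snd l₁ l₂ (by simpa using h)]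

lemma phom_prod_left (e₁ e₂ : PInst S k) : PHom (e₁.prod e₂) e₁ := by
  refine ⟨fun n => n.unpair.1, ?_, fun i => by simp [PInst.prod]⟩
  rintro f ⟨g, hg, g', hg', h, rfl⟩
  have hlen : g.args.length = g'.args.length := by
    rw [g.arity_eq, g'.arity_eq, h]
  have : (DBFact.prod g g' h).map (fun n => n.unpair.1) = g := by
    cases g
    simp only [DBFact.prod, DBFact.map, DBFact.mk.injEq, true_and]
    exact zip_unpair_fst _ _ hlen
  rwa [this]

lemma phom_prod_right (e₁ e₂ : PInst S k) : PHom (e₁.prod e₂) e₂ := by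
  refine ⟨fun n => n.unpair.2, ?_, fun i => by simp [PInst.prod]⟩
  rintro f ⟨g, hg, g', hg', h, rfl⟩
  have hlen : g.args.length = g'.args.length := by
    rw [g.arity_eq, g'.arity_eq, h]
  have : (DBFact.prod g g' h).map (fun n => n.unpair.2) = g' := by
    cases g'
    simp only [DBFact.prod, DBFact.map, DBFact.mk.injEq]
    exact ⟨h.symm ▸ rfl, zip_unpair_snd _ _ hlen⟩
  rwa [this]

lemma zip_pair_maps : ∀ (l : List ℕ) (h₁ h₂ : ℕ → ℕ),
    List.zipWith Nat.pair (l.map h₁) (l.map h₂) =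
      l.map (fun x => Nat.pair (h₁ x) (h₂ x))
  | [], _, _ => rfl
  | a :: l, h₁, h₂ => by
    simp only [List.map_cons, List.zipWith_cons_cons]
    rw [zip_pair_maps l h₁ h₂]

lemma PHom.pair {e e₁ e₂ : PInst S k} (H1 : PHom e e₁) (H2 : PHom e e₂) :
    PHom e (e₁.prod e₂) := by
  obtain ⟨h₁, hh₁, ha₁⟩ := H1
  obtain ⟨h₂, hh₂, ha₂⟩ := H2
  refine ⟨fun x => Nat.pair (h₁ x) (h₂ x), fun f hf => ?_, fun i => by
    simp [PInst.prod, ha₁ i, ha₂ i]⟩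
  refine ⟨f.map h₁, hh₁ f hf, f.map h₂, hh₂ f hf, rfl, ?_⟩
  cases f
  simp only [DBFact.map, DBFact.prod, DBFact.mk.injEq, true_and]
  exact (zip_pair_maps _ h₁ h₂).symm

lemma phom_foldl_mem : ∀ (l : List (PInst S k)) (e₀ : PInst S k),
    ∀ e ∈ e₀ :: l, PHom (List.foldl PInst.prod e₀ l) e
  | [], e₀, e, he => by
    simp only [List.mem_singleton] at he
    subst he
    exact PHom.refl _
  | x :: l, e₀, e, he => by
    have IH := phom_foldl_mem l (e₀.prod x)
    simp only [List.foldl_cons]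
    rcases List.mem_cons.1 he with rfl | he
    · exact (IH _ List.mem_cons_self).trans (phom_prod_left _ _)
    · rcases List.mem_cons.1 he with rfl | he
      · exact (IH _ List.mem_cons_self).trans (phom_prod_right _ _)
      · exact IH _ (List.mem_cons_of_mem _ he)

lemma phom_to_foldl (c : PInst S k) : ∀ (l : List (PInst S k)) (e₀ : PInst S k),
    (∀ e ∈ e₀ :: l, PHom c e) → PHom c (List.foldl PInst.prod e₀ l)
  | [], e₀, H => H e₀ List.mem_cons_self
  | x :: l, e₀, H => by
    simp only [List.foldl_cons]
    refine phom_to_foldl c l (e₀.prod x) ?_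
    intro e he
    rcases List.mem_cons.1 he with rfl | he
    · exact (H e₀ List.mem_cons_self).pair (H x (List.mem_cons_of_mem _ List.mem_cons_self))
    · exact H e (List.mem_cons_of_mem _ (List.mem_cons_of_mem _ he))

/-- Membership in the evaluation of a CQ, phrased via `PHom` from the canonical example. -/
lemma CQ.eval_iff_phom (q : CQ S k) (I : Instance S) (a : Fin k → ℕ) :
    a ∈ q.eval I ↔ (∀ i, a i ∈ I.adom) ∧ PHom q.canonEx (I, a) := Iff.rfl

lemma canonCQ_eval_iff (e : PInst S k) (I : Instance S) (a : Fin k → ℕ) :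
    a ∈ (canonCQ e).eval I ↔ (∀ i, a i ∈ I.adom) ∧ PHom e (I, a) := Iff.rfl

end Aux

/-- For every CQ `q` and collection of labeled examples `E` whose set of
positive examples is finite and nonempty (here enumerated by the nonempty list
`e₀ :: l`), the following are equivalent: (1) `q` is a most-specific fitting CQ for `E`;
(2) `q` fits `E` and `q` is equivalent to the canonical CQ of the direct product of all
positive examples. -/
theorem mostSpecific_iff_equiv_canonCQ_of_product
    {S : Schema} {k : ℕ} (q : CQ S k) (E : LabeledExamples S k)
    (hpos : ∀ e ∈ E.pos, IsExample e) (hneg : ∀ e ∈ E.neg, IsExample e)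
    (e₀ : PInst S k) (l : List (PInst S k))
    (henum : ∀ e : PInst S k, e ∈ (e₀ :: l) ↔ e ∈ E.pos) :
    IsMostSpecificFit q E ↔
      (q.fits E ∧ q.equiv (canonCQ (List.foldl PInst.prod e₀ l))) := by
  set P := List.foldl PInst.prod e₀ l with hP
  set p := canonCQ P with hp
  -- If a CQ fits the positive examples, its canonical example maps into `P`.
  have key : ∀ q' : CQ S k, (∀ e ∈ E.pos, e.2 ∈ q'.eval e.1) → PHom q'.canonEx P := by
    intro q' hfit
    refine phom_to_foldl _ l e₀ ?_
    intro e he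
    exact ((q'.eval_iff_phom e.1 e.2).1 (hfit e ((henum e).1 he))).2
  -- Hence `p ⊆ q'` for any `q'` fitting the positive examples.
  have p_cont : ∀ q' : CQ S k, (∀ e ∈ E.pos, e.2 ∈ q'.eval e.1) → p.contained q' := by
    intro q' hfit I a ha
    obtain ⟨hadom, hhom⟩ := (canonCQ_eval_iff P I a).1 ha
    exact (q'.eval_iff_phom I a).2 ⟨hadom, (key q' hfit).trans hhom⟩
  constructor
  · rintro ⟨hfits, hmost⟩
    -- `p` fits `E`.
    have hpfits : p.fits E := by
      constructor
      · intro e he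
        refine (canonCQ_eval_iff P e.1 e.2).2 ⟨hpos e he, ?_⟩
        exact phom_foldl_mem l e₀ e ((henum e).2 he)
      · intro e he hcontra
        obtain ⟨hadom, hhom⟩ := (canonCQ_eval_iff P e.1 e.2).1 hcontra
        refine hfits.2 e he ?_
        exact (q.eval_iff_phom e.1 e.2).2 ⟨hneg e he, (key q hfits.1).trans hhom⟩
    exact ⟨hfits, hmost p hpfits, p_cont q hfits.1⟩
  · rintro ⟨hfits, hqp, hpq⟩
    refine ⟨hfits, fun q' hfit' I a ha => ?_⟩
    exact p_cont q' hfit'.1 I (hqp I ha)
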